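/- arXiv:2605.30452 — 6 statements merged into one kernel-verified Lean document; each statement's English description precedes it below -/
import Mathlib

section
/- Let F : ℝ^d → ℝ be L-smooth (gradient L-Lipschitz) and nonnegative. Suppose iterates satisfy w_{t+1} = w_t - η_t d_t where for each t, ⟨d_t, ∇F(w_t)⟩ ≥ c Γ_t ‖d_t‖ for some constants c > 0 and Γ_t ≥ 0, and the step size is η_t = c Γ_t / (L ‖d_t‖) (with d_t ≠ 0). Then for all T ≥ 1, ∑_{t=0}^{T-1} Γ_t² ≤ 2 L F(w_0) / c². In particular min_{t < T} Γ_t ≤ sqrt(2 L F(w_0) / (c² T)). -/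
open scoped RealInnerProductSpace Finset
open Finset

section Descent

variable {H : Type*} [NormedAddCommGroup H] [InnerProductSpace ℝ H] [CompleteSpace H]

lemma descent_lemma (F : H → ℝ) (gradF : H → H) (L : ℝ) (hL : 0 ≤ L)
    (hgrad : ∀ x, HasGradientAt F (gradF x) x)
    (hlip : LipschitzWith L.toNNReal gradF) (x y : H) :
    F y ≤ F x + ⟪gradF x, y - x⟫ + L / 2 * ‖y - x‖ ^ 2 := by
  set v := y - x with hv
  have hline : ∀ t : ℝ, HasDerivAt (fun s : ℝ => x + s • v) v t := by
    intro t
    simpa using ((hasDerivAt_id t).smul_const v).const_add x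
  have hderiv : ∀ t : ℝ, HasDerivAt (fun s : ℝ => F (x + s • v))
      ⟪gradF (x + t • v), v⟫ t := by
    intro t
    have hF := (hgrad (x + t • v)).hasFDerivAt
    have := hF.comp_hasDerivAt t (hline t)
    simp at this
    exact this
  have hcont : Continuous fun t : ℝ => ⟪gradF (x + t • v), v⟫ := by
    have : Continuous fun t : ℝ => gradF (x + t • v) :=
      hlip.continuous.comp (by continuity)
    exact this.inner continuous_const
  have hFTC : F (x + (1:ℝ) • v) - F (x + (0:ℝ) • v)
      = ∫ t in (0:ℝ)..1, ⟪gradF (x + t • v), v⟫ := by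
    exact (intervalIntegral.integral_eq_sub_of_hasDerivAt
      (fun t _ => hderiv t) (hcont.intervalIntegrable 0 1)).symm
  have hxy : x + (1:ℝ) • v = y := by simp [hv]
  have h0 : x + (0:ℝ) • v = x := by simp
  rw [hxy, h0] at hFTC
  have hbound : ∀ t ∈ Set.Icc (0:ℝ) 1,
      ⟪gradF (x + t • v), v⟫ ≤ ⟪gradF x, v⟫ + L * t * ‖v‖ ^ 2 := by
    intro t ht
    have h1 : ⟪gradF (x + t • v), v⟫ - ⟪gradF x, v⟫
        = ⟪gradF (x + t • v) - gradF x, v⟫ := by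
      rw [inner_sub_left]
    have h2 : ⟪gradF (x + t • v) - gradF x, v⟫
        ≤ ‖gradF (x + t • v) - gradF x‖ * ‖v‖ := real_inner_le_norm _ _
    have h3 : ‖gradF (x + t • v) - gradF x‖ ≤ L * (t * ‖v‖) := by
      have key := hlip.dist_le_mul (x + t • v) x
      have hdd : (x + t • v) - x = t • v := by abel
      rw [dist_eq_norm, dist_eq_norm, hdd, Real.coe_toNNReal _ hL, norm_smul,
        Real.norm_eq_abs, abs_of_nonneg ht.1] at key
      linarith
    nlinarith [norm_nonneg v, mul_le_mul_of_nonneg_right h3 (norm_nonneg v)]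
  have hint : ∫ t in (0:ℝ)..1, ⟪gradF (x + t • v), v⟫
      ≤ ∫ t in (0:ℝ)..1, (⟪gradF x, v⟫ + L * t * ‖v‖ ^ 2) := by
    apply intervalIntegral.integral_mono_on (by norm_num)
      (hcont.intervalIntegrable 0 1)
      ((by continuity : Continuous fun t : ℝ => ⟪gradF x, v⟫ + L * t * ‖v‖ ^ 2).intervalIntegrable 0 1)
    exact hbound
  have hval : ∫ t in (0:ℝ)..1, (⟪gradF x, v⟫ + L * t * ‖v‖ ^ 2)
      = ⟪gradF x, v⟫ + L / 2 * ‖v‖ ^ 2 := by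
    rw [intervalIntegral.integral_add (intervalIntegrable_const)
      ((by continuity : Continuous fun t : ℝ => L * t * ‖v‖ ^ 2).intervalIntegrable 0 1)]
    simp only [intervalIntegral.integral_const, smul_eq_mul]
    have : ∫ t in (0:ℝ)..1, L * t * ‖v‖ ^ 2 = L / 2 * ‖v‖ ^ 2 := by
      have : (fun t : ℝ => L * t * ‖v‖ ^ 2) = fun t : ℝ => (L * ‖v‖ ^ 2) * t := by
        funext t; ring
      rw [this, intervalIntegral.integral_const_mul, integral_id]
      ring
    rw [this]; ring
  linarith [hFTC ▸ hint.trans_eq hval]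

end Descent

/-- descent under the sufficient alignment condition. -/
theorem stmt0 {n : ℕ} (F : EuclideanSpace ℝ (Fin n) → ℝ)
    (gradF : EuclideanSpace ℝ (Fin n) → EuclideanSpace ℝ (Fin n))
    (L c : ℝ) (hL : 0 < L) (hc : 0 < c)
    (hgrad : ∀ x, HasGradientAt F (gradF x) x)
    (hlip : LipschitzWith L.toNNReal gradF)
    (hFnonneg : ∀ x, 0 ≤ F x)
    (w d : ℕ → EuclideanSpace ℝ (Fin n)) (Γ η : ℕ → ℝ)
    (hΓ : ∀ t, 0 ≤ Γ t)
    (hd : ∀ t, d t ≠ 0)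
    (halign : ∀ t, c * Γ t * ‖d t‖ ≤ ⟪d t, gradF (w t)⟫)
    (hη : ∀ t, η t = c * Γ t / (L * ‖d t‖))
    (hupd : ∀ t, w (t + 1) = w t - η t • d t) :
    ∀ T : ℕ, 1 ≤ T →
      (∑ t ∈ range T, (Γ t) ^ 2 ≤ 2 * L * F (w 0) / c ^ 2) ∧
      ∃ t < T, Γ t ≤ Real.sqrt (2 * L * F (w 0) / (c ^ 2 * T)) := by
  -- per-step decrease
  have hstep : ∀ t, F (w (t + 1)) ≤ F (w t) - c ^ 2 * Γ t ^ 2 / (2 * L) := by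
    intro t
    have hdpos : 0 < ‖d t‖ := norm_pos_iff.mpr (hd t)
    have hηnn : 0 ≤ η t := by
      rw [hη t]
      exact div_nonneg (mul_nonneg hc.le (hΓ t)) (by positivity)
    have hdesc := descent_lemma F gradF L hL.le hgrad hlip (w t) (w (t + 1))
    have hdiff : w (t + 1) - w t = -(η t • d t) := by
      rw [hupd t]; abel
    have hinner : ⟪gradF (w t), w (t + 1) - w t⟫ = -(η t * ⟪d t, gradF (w t)⟫) := by
      rw [hdiff, inner_neg_right, inner_smul_right, real_inner_comm]
    have hnorm : ‖w (t + 1) - w t‖ ^ 2 = η t ^ 2 * ‖d t‖ ^ 2 := by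
      rw [hdiff, norm_neg, norm_smul, Real.norm_eq_abs, mul_pow, sq_abs]
    have hηval : η t * ‖d t‖ = c * Γ t / L := by
      rw [hη t]; field_simp
    have hkey : η t * ⟪d t, gradF (w t)⟫ ≥ c ^ 2 * Γ t ^ 2 / L := by
      have h1 : c * Γ t * ‖d t‖ ≤ ⟪d t, gradF (w t)⟫ := halign t
      have h2 : η t * (c * Γ t * ‖d t‖) ≤ η t * ⟪d t, gradF (w t)⟫ :=
        mul_le_mul_of_nonneg_left h1 hηnn
      have h3 : η t * (c * Γ t * ‖d t‖) = c ^ 2 * Γ t ^ 2 / L := by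
        have : η t * (c * Γ t * ‖d t‖) = (η t * ‖d t‖) * (c * Γ t) := by ring
        rw [this, hηval]; field_simp
      linarith
    have hnormval : η t ^ 2 * ‖d t‖ ^ 2 = c ^ 2 * Γ t ^ 2 / L ^ 2 := by
      have : η t ^ 2 * ‖d t‖ ^ 2 = (η t * ‖d t‖) ^ 2 := by ring
      rw [this, hηval]; field_simp
    rw [hinner, hnorm, hnormval] at hdesc
    have hLne : L ≠ 0 := hL.ne'
    calc F (w (t + 1)) ≤ F (w t) + -(η t * ⟪d t, gradF (w t)⟫)
          + L / 2 * (c ^ 2 * Γ t ^ 2 / L ^ 2) := hdesc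
      _ ≤ F (w t) + -(c ^ 2 * Γ t ^ 2 / L) + c ^ 2 * Γ t ^ 2 / (2 * L) := by
          have : L / 2 * (c ^ 2 * Γ t ^ 2 / L ^ 2) = c ^ 2 * Γ t ^ 2 / (2 * L) := by
            field_simp
          linarith [hkey]
      _ = F (w t) - c ^ 2 * Γ t ^ 2 / (2 * L) := by
          field_simp; ring
  -- telescoping sum bound
  have hsum : ∀ T : ℕ, ∑ t ∈ range T, Γ t ^ 2 ≤ 2 * L * F (w 0) / c ^ 2 := by
    intro T
    have htel : ∀ T : ℕ, F (w T) + ∑ t ∈ range T, c ^ 2 * Γ t ^ 2 / (2 * L) ≤ F (w 0) := by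
      intro T
      induction T with
      | zero => simp
      | succ T ih =>
        rw [Finset.sum_range_succ]
        have := hstep T
        linarith
    have h1 := htel T
    have h2 : 0 ≤ F (w T) := hFnonneg _
    have h3 : ∑ t ∈ range T, c ^ 2 * Γ t ^ 2 / (2 * L)
        = c ^ 2 / (2 * L) * ∑ t ∈ range T, Γ t ^ 2 := by
      rw [Finset.mul_sum]
      congr 1; funext t; ring
    have h4 : c ^ 2 / (2 * L) * ∑ t ∈ range T, Γ t ^ 2 ≤ F (w 0) := by
      rw [← h3]; linarith
    rw [div_mul_eq_mul_div, div_le_iff₀ (by positivity)] at h4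
    rw [le_div_iff₀ (by positivity)]
    nlinarith
  intro T hT
  refine ⟨hsum T, ?_⟩
  by_contra hcon
  push_neg at hcon
  set B := 2 * L * F (w 0) / c ^ 2 with hB
  have hBnn : 0 ≤ B := div_nonneg (by nlinarith [hFnonneg (w 0)]) (by positivity)
  have hTpos : (0:ℝ) < T := by exact_mod_cast hT
  have hs : Real.sqrt (2 * L * F (w 0) / (c ^ 2 * T)) ^ 2 = B / T := by
    rw [Real.sq_sqrt (div_nonneg (by nlinarith [hFnonneg (w 0)]) (by positivity))]
    rw [hB]; field_simp
  have hlt : ∀ t ∈ range T, B / T < Γ t ^ 2 := by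
    intro t ht
    have h1 := hcon t (Finset.mem_range.mp ht)
    have h2 : 0 ≤ Real.sqrt (2 * L * F (w 0) / (c ^ 2 * T)) := Real.sqrt_nonneg _
    calc B / T = Real.sqrt (2 * L * F (w 0) / (c ^ 2 * T)) ^ 2 := hs.symm
      _ < Γ t ^ 2 := by nlinarith [hΓ t]
  have hsumlt : ∑ t ∈ range T, B / T < ∑ t ∈ range T, Γ t ^ 2 :=
    Finset.sum_lt_sum_of_nonempty (Finset.nonempty_range_iff.mpr (by omega)) hlt
  rw [Finset.sum_const, Finset.card_range, nsmul_eq_mul] at hsumlt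
  have : (T:ℝ) * (B / T) = B := by field_simp
  rw [this] at hsumlt
  exact absurd (hsum T) (not_le.mpr hsumlt)
end

section
/- Let J ∈ ℝ^{d×m} and let cone(J) = {Jμ : μ ≥ 0} and cone*(J) = {d : Jᵀ d ≥ 0} (entrywise). If q = Jμ with μ ≥ 0, then the Euclidean projection d of q onto the closed convex cone cone*(J) lies in cone*(J) ∩ cone(J); moreover d = Jν for some ν ≥ 0 with ‖ν‖₁ ≥ ‖μ‖₁. -/
open scoped RealInnerProductSpace
open Finset


/-- helper for sums over a subset -/
private lemma sum_restrict {M : Type*} [AddCommMonoid M] {m : ℕ} (s : Finset (Fin m))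
    (f : Fin m → M) (hf : ∀ k ∉ s, f k = 0) : ∑ i : s, f i = ∑ k, f k := by
  rw [Finset.sum_coe_sort s f]
  exact Finset.sum_subset (Finset.subset_univ s) (fun k _ hk => hf k hk)

/-- conic Carathéodory -/
private lemma cone_carath {E : Type*} [AddCommGroup E] [Module ℝ E] {m : ℕ} (g : Fin m → E) :
    ∀ N (ν : Fin m → ℝ), (∀ k, 0 ≤ ν k) → ((univ.filter (fun k => ν k ≠ 0)).card ≤ N) →
    ∃ (s : Finset (Fin m)) (c : Fin m → ℝ),
      LinearIndependent ℝ (fun i : s => g i) ∧ (∀ k, 0 ≤ c k) ∧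
      (∀ k ∉ s, c k = 0) ∧ ∑ k, c k • g k = ∑ k, ν k • g k := by
  intro N
  induction N with
  | zero =>
    intro ν hν hcard
    have hz : ∀ k, ν k = 0 := by
      intro k; by_contra h
      have hk : k ∈ univ.filter (fun k => ν k ≠ 0) := by simp [h]
      have := Finset.card_pos.mpr ⟨k, hk⟩; omega
    have : IsEmpty ((∅ : Finset (Fin m)) : Type) := Finset.isEmpty_coe_sort.mpr rfl
    refine ⟨∅, 0, linearIndependent_empty_type, fun k => le_refl 0,
      fun k _ => rfl, ?_⟩
    simp [hz]
  | succ N ih =>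
    intro ν hν hcard
    by_cases hli : LinearIndependent ℝ (fun i : (univ.filter (fun k => ν k ≠ 0)) => g i)
    · exact ⟨_, ν, hli, hν, fun k hk => not_not.mp (by simpa using hk), rfl⟩
    · set s0 := univ.filter (fun k => ν k ≠ 0) with hs0
      obtain ⟨t, hts, i0, hi0⟩ := Fintype.not_linearIndependent_iff.mp hli
      -- extend t to Fin m
      set t' : Fin m → ℝ := fun k => if h : k ∈ s0 then t ⟨k, h⟩ else 0 with ht'
      have ht'sum : ∑ k, t' k • g k = 0 := by
        rw [← sum_restrict s0 (fun k => t' k • g k)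
          (fun k hk => by simp [ht', dif_neg hk])]
        rw [← hts]
        exact Finset.sum_congr rfl (fun i _ => by simp [ht', dif_pos i.2])
      have ht'supp : ∀ k ∉ s0, t' k = 0 := fun k hk => by simp [ht', dif_neg hk]
      -- wlog there is a positive component
      obtain ⟨u, husum, husupp, k2, hk2⟩ :
          ∃ u : Fin m → ℝ, (∑ k, u k • g k = 0) ∧ (∀ k ∉ s0, u k = 0) ∧ ∃ k, 0 < u k := by
        by_cases hpos : ∃ k, 0 < t' k
        · exact ⟨t', ht'sum, ht'supp, hpos⟩
        · push_neg at hpos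
          refine ⟨-t', by simp [ht'sum], fun k hk => by simp [ht'supp k hk], i0, ?_⟩
          have h1 : t' (i0 : Fin m) = t i0 := by simp [ht', dif_pos i0.2]
          have h2 : t' (i0 : Fin m) ≤ 0 := hpos _
          simp only [Pi.neg_apply]
          rcases lt_or_eq_of_le h2 with h | h
          · linarith
          · exact absurd (h1 ▸ h) hi0
      -- minimize ratio over positive components
      have hk2s0 : k2 ∈ s0 := by
        by_contra h; rw [husupp k2 h] at hk2; exact lt_irrefl 0 hk2
      set P := s0.filter (fun k => 0 < u k) with hP
      have hPne : P.Nonempty := ⟨k2, by simp [hP, hk2s0, hk2]⟩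
      obtain ⟨k1, hk1P, hk1min⟩ := Finset.exists_min_image P (fun k => ν k / u k) hPne
      have hk1s0 : k1 ∈ s0 := (Finset.mem_filter.mp hk1P).1
      have hk1pos : 0 < u k1 := (Finset.mem_filter.mp hk1P).2
      set θ := ν k1 / u k1 with hθ
      have hθ0 : 0 ≤ θ := div_nonneg (hν k1) hk1pos.le
      set ν' : Fin m → ℝ := fun k => ν k - θ * u k with hν'def
      have hν'0 : ∀ k, 0 ≤ ν' k := by
        intro k
        by_cases hu : 0 < u k
        · have hkP : k ∈ P := by
            refine Finset.mem_filter.mpr ⟨?_, hu⟩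
            by_contra h; rw [husupp k h] at hu; exact lt_irrefl 0 hu
          have := hk1min k hkP
          have hml : ν k1 * u k ≤ ν k * u k1 := by
            rw [div_le_div_iff₀ hk1pos hu] at this; linarith
          have hc : θ * u k1 = ν k1 := div_mul_cancel₀ _ (ne_of_gt hk1pos)
          have : θ * u k ≤ ν k := by nlinarith
          simp only [hν'def]; linarith
        · push_neg at hu
          have : θ * u k ≤ 0 := mul_nonpos_of_nonneg_of_nonpos hθ0 hu
          simp [hν'def]; linarith [hν k]
      have hν'k1 : ν' k1 = 0 := by
        simp [hν'def, hθ]; field_simp; ring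
      have hν'supp : ∀ k ∉ s0.erase k1, ν' k = 0 := by
        intro k hk
        by_cases hkk : k = k1
        · rw [hkk]; exact hν'k1
        · have hks0 : k ∉ s0 := fun h => hk (Finset.mem_erase.mpr ⟨hkk, h⟩)
          have h1 : ν k = 0 := not_not.mp (by simpa [hs0] using hks0)
          have h2 : u k = 0 := husupp k hks0
          simp [hν'def, h1, h2]
      have hcard' : (univ.filter (fun k => ν' k ≠ 0)).card ≤ N := by
        have hsub : univ.filter (fun k => ν' k ≠ 0) ⊆ s0.erase k1 := by
          intro k hk
          simp only [Finset.mem_filter] at hk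
          by_contra h
          exact hk.2 (hν'supp k h)
        have h1 := Finset.card_le_card hsub
        have h2 : (s0.erase k1).card = s0.card - 1 := Finset.card_erase_of_mem hk1s0
        have h3 : 0 < s0.card := Finset.card_pos.mpr ⟨k1, hk1s0⟩
        omega
      obtain ⟨s, c, hsli, hc0, hcsupp, hcsum⟩ := ih ν' hν'0 hcard'
      refine ⟨s, c, hsli, hc0, hcsupp, ?_⟩
      rw [hcsum]
      have : ∑ k, ν' k • g k = ∑ k, ν k • g k - θ • ∑ k, u k • g k := by
        rw [Finset.smul_sum, ← Finset.sum_sub_distrib]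
        exact Finset.sum_congr rfl (fun k _ => by
          simp [hν'def, sub_smul, mul_smul])
      rw [this, husum, smul_zero, sub_zero]

private lemma closed_piece {n m : ℕ} (g : Fin m → EuclideanSpace ℝ (Fin n)) (s : Finset (Fin m))
    (hli : LinearIndependent ℝ (fun i : s => g i)) :
    IsClosed {x : EuclideanSpace ℝ (Fin n) | ∃ c : Fin m → ℝ,
      (∀ k, 0 ≤ c k) ∧ (∀ k ∉ s, c k = 0) ∧ x = ∑ k, c k • g k} := by
  let T : (s → ℝ) →ₗ[ℝ] EuclideanSpace ℝ (Fin n) :=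
    { toFun := fun c => ∑ i : s, c i • g i
      map_add' := fun a b => by simp [add_smul, Finset.sum_add_distrib]
      map_smul' := fun r a => by simp [mul_smul, Finset.smul_sum]
      }
  have hker : LinearMap.ker T = ⊥ := by
    rw [LinearMap.ker_eq_bot']
    intro c hc
    exact funext (Fintype.linearIndependent_iff.mp hli c hc)
  have hemb := LinearMap.isClosedEmbedding_of_injective hker
  have hclosedset : IsClosed {c : s → ℝ | ∀ i, 0 ≤ c i} := by
    have heq : {c : s → ℝ | ∀ i, 0 ≤ c i} = ⋂ i, {c | 0 ≤ c i} := by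
      ext c; simp [Set.mem_iInter]
    rw [heq]
    exact isClosed_iInter (fun i => isClosed_le continuous_const (continuous_apply i))
  have himg := hemb.isClosedMap _ hclosedset
  have heq : {x : EuclideanSpace ℝ (Fin n) | ∃ c : Fin m → ℝ,
      (∀ k, 0 ≤ c k) ∧ (∀ k ∉ s, c k = 0) ∧ x = ∑ k, c k • g k}
      = T '' {c : s → ℝ | ∀ i, 0 ≤ c i} := by
    ext x
    constructor
    · rintro ⟨c, hc0, hcs, rfl⟩
      refine ⟨fun i => c i, fun i => hc0 i, ?_⟩
      show ∑ i : s, c i • g i = _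
      exact sum_restrict s (fun k => c k • g k) (fun k hk => by show c k • g k = 0; rw [hcs k hk, zero_smul])
    · rintro ⟨c, hc0, rfl⟩
      refine ⟨fun k => if h : k ∈ s then c ⟨k, h⟩ else 0, ?_, ?_, ?_⟩
      · intro k; by_cases h : k ∈ s
        · simp [dif_pos h]; exact hc0 _
        · simp [dif_neg h]
      · intro k hk; simp [dif_neg hk]
      · show (∑ i : s, c i • g i) = _
        rw [← sum_restrict s (fun k => (if h : k ∈ s then c ⟨k, h⟩ else 0) • g k)
          (fun k hk => by simp [dif_neg hk])]
        exact Finset.sum_congr rfl (fun i _ => by simp)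
  rw [heq]; exact himg

private lemma cone_isClosed {n m : ℕ} (g : Fin m → EuclideanSpace ℝ (Fin n))
    (hcar : ∀ (ν : Fin m → ℝ), (∀ k, 0 ≤ ν k) →
      ∃ (s : Finset (Fin m)) (c : Fin m → ℝ),
        LinearIndependent ℝ (fun i : s => g i) ∧ (∀ k, 0 ≤ c k) ∧
        (∀ k ∉ s, c k = 0) ∧ ∑ k, c k • g k = ∑ k, ν k • g k) :
    IsClosed {x : EuclideanSpace ℝ (Fin n) | ∃ ν : Fin m → ℝ,
      (∀ k, 0 ≤ ν k) ∧ x = ∑ k, ν k • g k} := by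
  have heq : {x : EuclideanSpace ℝ (Fin n) | ∃ ν : Fin m → ℝ,
      (∀ k, 0 ≤ ν k) ∧ x = ∑ k, ν k • g k}
      = ⋃ s : {s : Finset (Fin m) // LinearIndependent ℝ (fun i : s => g i)},
        {x : EuclideanSpace ℝ (Fin n) | ∃ c : Fin m → ℝ,
          (∀ k, 0 ≤ c k) ∧ (∀ k ∉ s.1, c k = 0) ∧ x = ∑ k, c k • g k} := by
    ext x
    simp only [Set.mem_iUnion, Set.mem_setOf_eq]
    constructor
    · rintro ⟨ν, hν, rfl⟩
      obtain ⟨s, c, hsli, hc0, hcs, hsum⟩ := hcar ν hν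
      exact ⟨⟨s, hsli⟩, c, hc0, hcs, hsum.symm⟩
    · rintro ⟨s, c, hc0, _, rfl⟩
      exact ⟨c, hc0, rfl⟩
  rw [heq]
  exact isClosed_iUnion_of_finite (fun s => closed_piece g s.1 s.2)


private lemma aux_nonpos {a b : ℝ} (hb : 0 ≤ b)
    (h : ∀ t : ℝ, 0 < t → t ≤ 1 → 2 * t * a ≤ t ^ 2 * b) : a ≤ 0 := by
  by_contra ha
  push_neg at ha
  rcases eq_or_lt_of_le hb with hb0 | hb0
  · have := h 1 one_pos le_rfl; rw [← hb0] at this; nlinarith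
  · set t := min 1 (a / b) with ht
    have htpos : 0 < t := lt_min one_pos (div_pos ha hb0)
    have ht1 : t ≤ 1 := min_le_left _ _
    have htb : t * b ≤ a := by
      have : t ≤ a / b := min_le_right _ _
      rw [le_div_iff₀ hb0] at this; linarith
    have := h t htpos ht1
    nlinarith

theorem stmt2' {n m : ℕ} (g : Fin m → EuclideanSpace ℝ (Fin n))
    (μ : Fin m → ℝ) (hμ : ∀ k, 0 ≤ μ k)
    (q : EuclideanSpace ℝ (Fin n)) (hq : q = ∑ k, μ k • g k)
    (d : EuclideanSpace ℝ (Fin n))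
    (hdmem : ∀ k, 0 ≤ ⟪d, g k⟫)
    (hdproj : ∀ y : EuclideanSpace ℝ (Fin n), (∀ k, 0 ≤ ⟪y, g k⟫) → ‖q - d‖ ≤ ‖q - y‖)
    (hclosed : IsClosed {x : EuclideanSpace ℝ (Fin n) | ∃ ν : Fin m → ℝ,
      (∀ k, 0 ≤ ν k) ∧ x = ∑ k, ν k • g k}) :
    (∀ k, 0 ≤ ⟪d, g k⟫) ∧
    ∃ ν : Fin m → ℝ, (∀ k, 0 ≤ ν k) ∧ d = ∑ k, ν k • g k ∧
      ∑ k, |μ k| ≤ ∑ k, |ν k| := by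
  refine ⟨hdmem, ?_⟩
  set p := q - d with hp
  -- variational inequality
  have key : ∀ y : EuclideanSpace ℝ (Fin n),
      (∀ t : ℝ, 0 < t → t ≤ 1 → ∀ k, 0 ≤ ⟪d + t • y, g k⟫) → ⟪p, y⟫ ≤ 0 := by
    intro y hy
    apply aux_nonpos (sq_nonneg ‖y‖)
    intro t ht ht1
    have h1 := hdproj (d + t • y) (hy t ht ht1)
    have h2 : ‖p‖ ^ 2 ≤ ‖p - t • y‖ ^ 2 := by
      have heq : q - (d + t • y) = p - t • y := by rw [hp]; abel
      rw [heq] at h1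
      exact pow_le_pow_left₀ (norm_nonneg _) h1 2
    have h3 : ‖p - t • y‖ ^ 2 = ‖p‖ ^ 2 - 2 * (t * ⟪p, y⟫) + t ^ 2 * ‖y‖ ^ 2 := by
      rw [@norm_sub_sq_real, real_inner_smul_right, norm_smul]
      rw [mul_pow, Real.norm_eq_abs, sq_abs]
    nlinarith
  have hKstar : ∀ y : EuclideanSpace ℝ (Fin n), (∀ k, 0 ≤ ⟪y, g k⟫) → ⟪p, y⟫ ≤ 0 := by
    intro y hy
    apply key
    intro t ht _ k
    rw [inner_add_left, real_inner_smul_left]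
    exact add_nonneg (hdmem k) (mul_nonneg ht.le (hy k))
  -- the finitely generated cone as a ConvexCone
  set C : ConvexCone ℝ (EuclideanSpace ℝ (Fin n)) :=
    { carrier := {x | ∃ ν : Fin m → ℝ, (∀ k, 0 ≤ ν k) ∧ x = ∑ k, ν k • g k}
      smul_mem' := by
        rintro r hr x ⟨ν, hν, rfl⟩
        exact ⟨fun k => r * ν k, fun k => mul_nonneg hr.le (hν k),
          by rw [Finset.smul_sum]; exact Finset.sum_congr rfl (fun k _ => (mul_smul r (ν k) (g k)).symm)⟩
      add_mem' := by
        rintro x ⟨ν, hν, rfl⟩ y ⟨ν', hν', rfl⟩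
        exact ⟨fun k => ν k + ν' k, fun k => add_nonneg (hν k) (hν' k),
          by rw [← Finset.sum_add_distrib]; exact Finset.sum_congr rfl (fun k _ => (add_smul (ν k) (ν' k) (g k)).symm)⟩ } with hC
  have hCne : (C : Set (EuclideanSpace ℝ (Fin n))).Nonempty :=
    ⟨0, ⟨0, fun k => le_refl 0, by simp⟩⟩
  have hgk : ∀ k, g k ∈ C := by
    intro k
    refine ⟨fun j => if j = k then 1 else 0, fun j => by positivity, ?_⟩
    simp [ite_smul]
  have hmem : -p ∈ C := by
    by_contra hnp
    obtain ⟨y, hy1, hy2⟩ : ∃ y, (∀ x ∈ C, 0 ≤ ⟪x, y⟫) ∧ ⟪y, -p⟫ < 0 := by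
      let K : ProperCone ℝ (EuclideanSpace ℝ (Fin n)) :=
        { carrier := {x | ∃ ν : Fin m → ℝ, (∀ k, 0 ≤ ν k) ∧ x = ∑ k, ν k • g k}
          zero_mem' := ⟨0, fun k => le_refl 0, by simp⟩
          add_mem' := by
            rintro x y ⟨ν, hν, rfl⟩ ⟨ν', hν', rfl⟩
            exact ⟨fun k => ν k + ν' k, fun k => add_nonneg (hν k) (hν' k),
              by rw [← Finset.sum_add_distrib]; exact Finset.sum_congr rfl (fun k _ => (add_smul (ν k) (ν' k) (g k)).symm)⟩
          smul_mem' := by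
            rintro c x ⟨ν, hν, rfl⟩
            exact ⟨fun k => (c : ℝ) * ν k, fun k => mul_nonneg c.2 (hν k),
              by change (c : ℝ) • ∑ k, ν k • g k = _; rw [Finset.smul_sum]; exact Finset.sum_congr rfl (fun k _ => (mul_smul _ (ν k) (g k)).symm)⟩
          isClosed' := hclosed }
      obtain ⟨y, hy1, hy2⟩ := K.hyperplane_separation' (x₀ := -p) hnp
      exact ⟨y, hy1, by rw [real_inner_comm]; exact hy2⟩
    have hyK : ∀ k, 0 ≤ ⟪y, g k⟫ := fun k => by
      rw [real_inner_comm]; exact hy1 _ (hgk k)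
    have h4 := hKstar y hyK
    rw [inner_neg_right] at hy2
    rw [real_inner_comm] at h4
    linarith
  obtain ⟨lam, hlam, hplam⟩ := hmem
  refine ⟨fun k => μ k + lam k, fun k => add_nonneg (hμ k) (hlam k), ?_, ?_⟩
  · have hd : d = q + -p := by rw [hp]; abel
    rw [hd, hq, hplam, ← Finset.sum_add_distrib]
    exact Finset.sum_congr rfl (fun k _ => (add_smul (μ k) (lam k) (g k)).symm)
  · apply Finset.sum_le_sum
    intro k _
    rw [abs_of_nonneg (hμ k), abs_of_nonneg (add_nonneg (hμ k) (hlam k))]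
    linarith [hlam k]


/-- the projection of a point of `cone(J)` onto the dual cone
`cone*(J)` lies in `cone*(J) ∩ cone(J)`, with ℓ₁-larger coefficients. -/
theorem stmt2 {n m : ℕ} (g : Fin m → EuclideanSpace ℝ (Fin n))
    (μ : Fin m → ℝ) (hμ : ∀ k, 0 ≤ μ k)
    (q : EuclideanSpace ℝ (Fin n)) (hq : q = ∑ k, μ k • g k)
    (d : EuclideanSpace ℝ (Fin n))
    -- d is the Euclidean (metric) projection of q onto cone*(J):
    (hdmem : ∀ k, 0 ≤ ⟪d, g k⟫)
    (hdproj : ∀ y : EuclideanSpace ℝ (Fin n), (∀ k, 0 ≤ ⟪y, g k⟫) → ‖q - d‖ ≤ ‖q - y‖) :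
    (∀ k, 0 ≤ ⟪d, g k⟫) ∧
    ∃ ν : Fin m → ℝ, (∀ k, 0 ≤ ν k) ∧ d = ∑ k, ν k • g k ∧
      ∑ k, |μ k| ≤ ∑ k, |ν k| := by
  have hclosed := cone_isClosed g (fun ν hν => cone_carath g m ν hν
    (le_trans (Finset.card_filter_le _ _) (by simp)))
  exact stmt2' g μ hμ q hq d hdmem hdproj hclosed
end

section
/- Fenchel conjugate of CVaR: for 0 < ε ≤ 1 define s(x) = CVaR_ε(x) = min_{α ∈ ℝ} { α + (1/(εm)) ∑_{k=1}^m max(0, -x_k - α) } for x ∈ ℝ^m. Then for λ ∈ ℝ^m, s*(-λ) = 0 if λ lies in the probability simplex and λ_k ≤ 1/(εm) for all k, and s*(-λ) = +∞ otherwise. -/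
open Finset

/-- the Fenchel conjugate of `CVaR_ε` is the indicator of the
capped simplex `{λ ∈ Δ : λ_k ≤ 1/(εm)}`. -/
theorem stmt10 (m : ℕ) (hm : 0 < m) (ε : ℝ) (hε0 : 0 < ε) (hε1 : ε ≤ 1)
    (s : (Fin m → ℝ) → ℝ)
    (hs : ∀ x : Fin m → ℝ,
      s x = ⨅ α : ℝ, (α + (1 / (ε * m)) * ∑ k, max 0 (-x k - α)))
    (sstar : (Fin m → ℝ) → EReal)
    (hsstar : ∀ y : Fin m → ℝ,
      sstar y = ⨆ x : Fin m → ℝ, (((∑ k, y k * x k) - s x : ℝ) : EReal))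
    (lam : Fin m → ℝ) :
    (((∀ k, 0 ≤ lam k) ∧ (∑ k, lam k = 1) ∧ (∀ k, lam k ≤ 1 / (ε * m))) →
        sstar (-lam) = 0) ∧
    (¬ ((∀ k, 0 ≤ lam k) ∧ (∑ k, lam k = 1) ∧ (∀ k, lam k ≤ 1 / (ε * m))) →
        sstar (-lam) = ⊤) := by
  have hmR : (0:ℝ) < m := by exact_mod_cast hm
  have hmne : (m:ℝ) ≠ 0 := ne_of_gt hmR
  set c : ℝ := 1 / (ε * m) with hc
  have hc0 : 0 < c := by rw [hc]; positivity
  have hcm : 1 / (m:ℝ) ≤ c := by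
    rw [hc]
    apply one_div_le_one_div_of_le (by positivity)
    nlinarith
  set f : (Fin m → ℝ) → ℝ → ℝ := fun x α => α + c * ∑ k, max 0 (-x k - α) with hf
  have hsf : ∀ x, s x = ⨅ α, f x α := hs
  -- uniform lower bound on f x ·
  have hlow : ∀ x α, (1/m) * ∑ k, (-x k) ≤ f x α := by
    intro x α
    have h1 : ∑ k, (-x k - α) ≤ ∑ k, max 0 (-x k - α) :=
      Finset.sum_le_sum (fun k _ => le_max_right _ _)
    have h2 : (0:ℝ) ≤ ∑ k, max 0 (-x k - α) :=
      Finset.sum_nonneg (fun k _ => le_max_left _ _)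
    have h3 : (1/m) * ∑ k, max 0 (-x k - α) ≤ c * ∑ k, max 0 (-x k - α) :=
      mul_le_mul_of_nonneg_right hcm h2
    have h4 : ∑ k, (-x k - α) = (∑ k, (-x k)) - m * α := by
      rw [Finset.sum_sub_distrib, Finset.sum_const, Finset.card_univ, Fintype.card_fin,
        nsmul_eq_mul]
    have h5 : (1/↑m) * ∑ k, (-x k - α) = (1/↑m) * ∑ k, (-x k) - α := by
      rw [h4]; field_simp
    have h6 : (1/↑m) * ∑ k, (-x k - α) ≤ (1/↑m) * ∑ k, max 0 (-x k - α) :=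
      mul_le_mul_of_nonneg_left h1 (by positivity)
    simp only [hf]
    linarith
  have hbdd : ∀ x, BddBelow (Set.range (f x)) := fun x =>
    ⟨(1/m) * ∑ k, (-x k), by rintro y ⟨α, rfl⟩; exact hlow x α⟩
  have hsle : ∀ x α, s x ≤ f x α := fun x α => by
    rw [hsf x]; exact ciInf_le (hbdd x) α
  have hsge : ∀ x, (1/m) * ∑ k, (-x k) ≤ s x := fun x => by
    rw [hsf x]; exact le_ciInf (hlow x)
  constructor
  · rintro ⟨hA, hB, hC⟩
    rw [hsstar]
    apply le_antisymm
    · apply iSup_le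
      intro x
      have key : -∑ k, lam k * x k ≤ s x := by
        rw [hsf x]
        apply le_ciInf
        intro α
        have h1 : ∀ k ∈ univ, lam k * (-x k - α) ≤ c * max 0 (-x k - α) := by
          intro k _
          calc lam k * (-x k - α) ≤ lam k * max 0 (-x k - α) :=
                mul_le_mul_of_nonneg_left (le_max_right _ _) (hA k)
            _ ≤ c * max 0 (-x k - α) :=
                mul_le_mul_of_nonneg_right (hC k) (le_max_left _ _)
        have h2 : ∑ k, lam k * (-x k - α) ≤ c * ∑ k, max 0 (-x k - α) := by
          rw [Finset.mul_sum]; exact Finset.sum_le_sum h1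
        have h3 : ∑ k, lam k * (-x k - α) = -∑ k, lam k * x k - α := by
          have : ∑ k, lam k * (-x k - α) = ∑ k, (-(lam k * x k) - lam k * α) := by
            apply Finset.sum_congr rfl; intro k _; ring
          rw [this, Finset.sum_sub_distrib, ← Finset.sum_neg_distrib, ← Finset.sum_mul, hB]
          ring
        simp only [hf]
        linarith
      have hx : (∑ k, (-lam) k * x k - s x : ℝ) ≤ 0 := by
        have : ∑ k, (-lam) k * x k = -∑ k, lam k * x k := by
          simp [neg_mul, Finset.sum_neg_distrib]
        rw [this]; linarith
      calc ((∑ k, (-lam) k * x k - s x : ℝ) : EReal) ≤ ((0:ℝ) : EReal) :=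
            EReal.coe_le_coe_iff.mpr hx
        _ = 0 := rfl
    · have hs0le : s 0 ≤ 0 := by
        have := hsle 0 0
        simpa [hf] using this
      have h0 : ((0:ℝ):EReal) ≤ ((∑ k, (-lam) k * (0 : Fin m → ℝ) k - s 0 : ℝ) : EReal) := by
        apply EReal.coe_le_coe_iff.mpr
        simp only [Pi.zero_apply, mul_zero, Finset.sum_const_zero, zero_sub]
        linarith
      calc (0:EReal) = ((0:ℝ):EReal) := rfl
        _ ≤ _ := h0
        _ ≤ _ := le_iSup (fun x : Fin m → ℝ =>
            ((∑ k, (-lam) k * x k - s x : ℝ) : EReal)) (0 : Fin m → ℝ)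
  · intro h
    rw [hsstar, iSup_eq_top]
    intro b hb
    obtain ⟨r, hbr, -⟩ := EReal.exists_between_coe_real hb
    suffices hcl : ∃ x : Fin m → ℝ, r ≤ (∑ k, (-lam) k * x k - s x) by
      obtain ⟨x, hx⟩ := hcl
      exact ⟨x, lt_of_lt_of_le hbr (EReal.coe_le_coe_iff.mpr hx)⟩
    by_cases hA : ∀ k, 0 ≤ lam k
    · by_cases hC : ∀ k, lam k ≤ c
      · -- sum must differ from 1
        have hB : ∑ k, lam k ≠ 1 := fun hB => h ⟨hA, hB, hC⟩
        set S := ∑ k, lam k with hS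
        have hSne : (1 : ℝ) - S ≠ 0 := by
          intro hh; apply hB; linarith
        set t : ℝ := r / (1 - S) with ht
        refine ⟨fun _ => t, ?_⟩
        have hsub : s (fun _ => t) = -t := by
          apply le_antisymm
          · have := hsle (fun _ => t) (-t)
            simpa [hf] using this
          · have := hsge (fun _ => t)
            have hsum : (1/↑m) * ∑ _k : Fin m, (-t) = -t := by
              rw [Finset.sum_const, Finset.card_univ, Fintype.card_fin, nsmul_eq_mul]
              field_simp
            rw [hsum] at this
            exact this
        have hxs : ∑ k, (-lam) k * t = -S * t := by
          simp only [Pi.neg_apply]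
          rw [← Finset.sum_mul, Finset.sum_neg_distrib, hS]
        rw [hsub, hxs]
        have : -S * t - -t = r := by
          rw [ht]; field_simp; ring
        linarith
      · -- some lam j > c
        push_neg at hC
        obtain ⟨j, hj⟩ := hC
        set t : ℝ := max (r / (lam j - c)) 0 with ht
        have ht0 : 0 ≤ t := le_max_right _ _
        have hjc : 0 < lam j - c := by linarith
        have hrt : r ≤ (lam j - c) * t := by
          have h1 : (lam j - c) * (r / (lam j - c)) ≤ (lam j - c) * t :=
            mul_le_mul_of_nonneg_left (le_max_left _ _) (le_of_lt hjc)
          rwa [mul_div_cancel₀ _ (ne_of_gt hjc)] at h1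
        set x : Fin m → ℝ := fun k => if k = j then -t else 0 with hx
        refine ⟨x, ?_⟩
        have hsx : s x ≤ c * t := by
          have := hsle x 0
          have hsum : ∑ k, max 0 (-x k - 0) = t := by
            rw [Finset.sum_eq_single j]
            · simp [hx, max_eq_right ht0]
            · intro k _ hk; simp [hx, hk]
            · intro hj'; exact absurd (mem_univ j) hj'
          rw [hf] at this
          simp only at this
          rw [hsum] at this
          linarith
        have hxsum : ∑ k, (-lam) k * x k = lam j * t := by
          rw [Finset.sum_eq_single j]
          · simp [hx]
          · intro k _ hk; simp [hx, hk]
          · intro hj'; exact absurd (mem_univ j) hj'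
        rw [hxsum]
        nlinarith
    · -- some lam j < 0
      push_neg at hA
      obtain ⟨j, hj⟩ := hA
      set t : ℝ := max (r / (-lam j)) 0 with ht
      have ht0 : 0 ≤ t := le_max_right _ _
      have hjn : 0 < -lam j := by linarith
      have hrt : r ≤ -lam j * t := by
        have h1 : -lam j * (r / (-lam j)) ≤ -lam j * t :=
          mul_le_mul_of_nonneg_left (le_max_left _ _) (le_of_lt hjn)
        rwa [mul_div_cancel₀ _ (ne_of_gt hjn)] at h1
      set x : Fin m → ℝ := fun k => if k = j then t else 0 with hx
      refine ⟨x, ?_⟩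
      have hsx : s x ≤ 0 := by
        have := hsle x 0
        have hsum : ∑ k, max 0 (-x k - 0) = 0 := by
          apply Finset.sum_eq_zero
          intro k _
          by_cases hk : k = j
          · simp [hx, hk, max_eq_left (neg_nonpos.mpr ht0)]
          · simp [hx, hk]
        rw [hf] at this
        simp only at this
        rw [hsum] at this
        linarith
      have hxsum : ∑ k, (-lam) k * x k = -lam j * t := by
        rw [Finset.sum_eq_single j]
        · simp [hx]
        · intro k _ hk; simp [hx, hk]
        · intro hj'; exact absurd (mem_univ j) hj'
      rw [hxsum]
      linarith
end

section
/- Strong duality for capped MGDA: let g_1, …, g_m ∈ ℝ^d and C ≥ 1/m. Then min over (d, α) ∈ ℝ^d × ℝ of [ α + C ∑_{k=1}^m max(0, ⟨-d, g_k⟩ - α) + (1/2)‖d‖² ] equals -(1/2) min { ‖∑_k λ_k g_k‖² : λ ∈ Δ, λ_k ≤ C ∀k }, and the optimal primal direction is d = ∑_k λ*_k g_k for the optimal dual λ*. -/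
open scoped RealInnerProductSpace
open Finset

section Aux

variable {n m : ℕ}

/-- The feasible (capped simplex) set is compact. -/
lemma capped_simplex_compact (m : ℕ) (C : ℝ) :
    IsCompact {l : Fin m → ℝ | (∀ k, 0 ≤ l k) ∧ (∑ k, l k = 1) ∧ (∀ k, l k ≤ C)} := by
  have hsub : {l : Fin m → ℝ | (∀ k, 0 ≤ l k) ∧ (∑ k, l k = 1) ∧ (∀ k, l k ≤ C)}
      ⊆ Set.Icc (fun _ => (0:ℝ)) (fun _ => C) := by
    rintro l ⟨h0, _, hc⟩
    exact ⟨fun k => h0 k, fun k => hc k⟩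
  have hclosed : IsClosed {l : Fin m → ℝ | (∀ k, 0 ≤ l k) ∧ (∑ k, l k = 1) ∧ (∀ k, l k ≤ C)} := by
    have heq : {l : Fin m → ℝ | (∀ k, 0 ≤ l k) ∧ (∑ k, l k = 1) ∧ (∀ k, l k ≤ C)}
        = (⋂ k, {l : Fin m → ℝ | 0 ≤ l k}) ∩
          ({l : Fin m → ℝ | ∑ k, l k = 1} ∩ ⋂ k, {l : Fin m → ℝ | l k ≤ C}) := by
      ext l
      simp only [Set.mem_setOf_eq, Set.mem_inter_iff, Set.mem_iInter]
    rw [heq]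
    exact (isClosed_iInter fun k => isClosed_le continuous_const (continuous_apply k)).inter
      ((isClosed_eq (continuous_finset_sum _ fun k _ => continuous_apply k) continuous_const).inter
        (isClosed_iInter fun k => isClosed_le (continuous_apply k) continuous_const))
  exact (isCompact_Icc).of_isClosed_subset hclosed hsub

end Aux

set_option maxHeartbeats 1000000 in
/-- strong duality for capped MGDA. -/
theorem stmt12 {n m : ℕ} (hm : 0 < m) (g : Fin m → EuclideanSpace ℝ (Fin n))
    (C : ℝ) (hC : 1 / (m : ℝ) ≤ C) :
    ∃ lamstar : Fin m → ℝ,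
      (∀ k, 0 ≤ lamstar k) ∧ (∑ k, lamstar k = 1) ∧ (∀ k, lamstar k ≤ C) ∧
      -- λ* is optimal for the dual quadratic program:
      (∀ lam : Fin m → ℝ, (∀ k, 0 ≤ lam k) → (∑ k, lam k = 1) → (∀ k, lam k ≤ C) →
        ‖∑ k, lamstar k • g k‖ ^ 2 ≤ ‖∑ k, lam k • g k‖ ^ 2) ∧
      -- the primal optimal value equals minus half the dual optimal value:
      sInf {v : ℝ | ∃ (d : EuclideanSpace ℝ (Fin n)) (α : ℝ),
          v = α + C * ∑ k, max 0 (⟪-d, g k⟫ - α) + (1 / 2) * ‖d‖ ^ 2}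
        = -(1 / 2) * ‖∑ k, lamstar k • g k‖ ^ 2 ∧
      -- the optimal primal direction is d = ∑ λ*_k g_k:
      ∃ α : ℝ,
        α + C * ∑ k, max 0 (⟪-(∑ j, lamstar j • g j), g k⟫ - α)
          + (1 / 2) * ‖∑ j, lamstar j • g j‖ ^ 2
          = -(1 / 2) * ‖∑ k, lamstar k • g k‖ ^ 2 := by
  classical
  set K : Set (Fin m → ℝ) :=
    {l | (∀ k, 0 ≤ l k) ∧ (∑ k, l k = 1) ∧ (∀ k, l k ≤ C)} with hK
  have hmpos : (0:ℝ) < m := by exact_mod_cast hm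
  have hKne : K.Nonempty := by
    refine ⟨fun _ => 1 / m, fun k => by positivity, ?_, fun k => hC⟩
    rw [Finset.sum_const, Finset.card_univ, Fintype.card_fin, nsmul_eq_mul,
      mul_one_div, div_self (ne_of_gt hmpos)]
  have hcont : ContinuousOn (fun l : Fin m → ℝ => ‖∑ k, l k • g k‖ ^ 2) K := by
    apply Continuous.continuousOn
    have : Continuous fun l : Fin m → ℝ => ∑ k, l k • g k :=
      continuous_finset_sum _ fun k _ => (continuous_apply k).smul continuous_const
    exact (this.norm.pow 2)
  obtain ⟨lam, hlamK, hmin⟩ := (capped_simplex_compact m C).exists_isMinOn hKne hcont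
  obtain ⟨hpos, hsum, hcap⟩ := hlamK
  set s : EuclideanSpace ℝ (Fin n) := ∑ k, lam k • g k with hs
  have hmin' : ∀ l ∈ K, ‖s‖ ^ 2 ≤ ‖∑ k, l k • g k‖ ^ 2 := fun l hl => hmin hl
  -- t k = ⟪-s, g k⟫
  set t : Fin m → ℝ := fun k => -⟪s, g k⟫ with ht
  have hinner_sum : ∀ l : Fin m → ℝ, ⟪s, ∑ k, l k • g k⟫ = ∑ k, l k * ⟪s, g k⟫ := by
    intro l
    rw [inner_sum]
    exact Finset.sum_congr rfl fun k _ => real_inner_smul_right _ _ _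
  have hlamt : ∑ k, lam k * t k = -‖s‖ ^ 2 := by
    have h1 : ⟪s, s⟫ = ∑ k, lam k * ⟪s, g k⟫ := by rw [← hinner_sum]
    have h2 : ⟪s, s⟫ = ‖s‖ ^ 2 := real_inner_self_eq_norm_sq s
    simp only [ht, mul_neg, Finset.sum_neg_distrib]
    rw [← h1, h2]
  -- Lemma A: first-order optimality ⇒ linear optimality
  have hlin : ∀ l ∈ K, ∑ k, l k * t k ≤ -‖s‖ ^ 2 := by
    intro l hl
    set y : EuclideanSpace ℝ (Fin n) := ∑ k, l k • g k with hy
    have hA : ‖s‖ ^ 2 ≤ ⟪s, y⟫ := by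
      by_contra hcon
      push_neg at hcon
      set c : ℝ := ⟪s, y - s⟫ with hcdef
      have hc : c < 0 := by
        have : ⟪s, y - s⟫ = ⟪s, y⟫ - ‖s‖ ^ 2 := by
          rw [inner_sub_right, real_inner_self_eq_norm_sq]
        rw [hcdef, this]; linarith
      set B : ℝ := ‖y - s‖ ^ 2 with hBdef
      have hB : 0 ≤ B := by positivity
      set ε : ℝ := min 1 (-c / (B + 1)) with hε
      have hεpos : 0 < ε := by
        apply lt_min one_pos
        apply div_pos (by linarith) (by linarith)
      have hε1 : ε ≤ 1 := min_le_left _ _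
      have hεB : ε * (B + 1) ≤ -c := by
        have h' : ε ≤ -c / (B + 1) := min_le_right _ _
        calc ε * (B + 1) ≤ (-c / (B + 1)) * (B + 1) := by nlinarith
          _ = -c := by field_simp
      -- the perturbed point is feasible
      obtain ⟨hl0, hlsum, hlcap⟩ := hl
      have hfeas : (fun k => (1 - ε) * lam k + ε * l k) ∈ K := by
        refine ⟨fun k => by
          dsimp only
          have h1 := mul_nonneg (by linarith : (0:ℝ) ≤ 1 - ε) (hpos k)
          have h2 := mul_nonneg hεpos.le (hl0 k)
          linarith, ?_, fun k => by
          dsimp only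
          have h1 := mul_le_mul_of_nonneg_left (hcap k) (by linarith : (0:ℝ) ≤ 1 - ε)
          have h2 := mul_le_mul_of_nonneg_left (hlcap k) hεpos.le
          linarith⟩
        rw [Finset.sum_add_distrib, ← Finset.mul_sum, ← Finset.mul_sum, hsum, hlsum]
        ring
      have hcomb : ∑ k, ((1 - ε) * lam k + ε * l k) • g k = s + ε • (y - s) := by
        rw [Finset.sum_congr rfl (fun k _ => add_smul _ _ _), Finset.sum_add_distrib]
        have e1 : ∑ k, ((1 - ε) * lam k) • g k = (1 - ε) • s := by
          rw [hs, Finset.smul_sum]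
          exact Finset.sum_congr rfl fun k _ => by rw [smul_smul]
        have e2 : ∑ k, (ε * l k) • g k = ε • y := by
          rw [hy, Finset.smul_sum]
          exact Finset.sum_congr rfl fun k _ => by rw [smul_smul]
        rw [e1, e2, smul_sub, sub_smul, one_smul]
        abel
      have hexp : ‖s + ε • (y - s)‖ ^ 2 = ‖s‖ ^ 2 + 2 * (ε * c) + ε ^ 2 * B := by
        rw [norm_add_sq_real, real_inner_smul_right, norm_smul]
        rw [Real.norm_eq_abs, abs_of_pos hεpos]
        ring
      have := hmin' _ hfeas
      rw [hcomb, hexp] at this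
      nlinarith
    have : ⟪s, y⟫ = -∑ k, l k * t k := by
      rw [hinner_sum]
      simp [ht, mul_neg, Finset.sum_neg_distrib]
    linarith [hA, this ▸ hA]
  -- exchange argument
  have hexch : ∀ j k : Fin m, 0 < lam j → t j < t k → lam k = C := by
    intro j k hj htjk
    by_contra hck
    have hkC : lam k < C := lt_of_le_of_ne (hcap k) hck
    have hjk : j ≠ k := by rintro rfl; exact lt_irrefl _ htjk
    set ε : ℝ := min (lam j) (C - lam k) with hε
    have hεpos : 0 < ε := lt_min hj (by linarith)
    have hεj : ε ≤ lam j := min_le_left _ _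
    have hεk : ε ≤ C - lam k := min_le_right _ _
    set l' : Fin m → ℝ := fun i =>
      lam i + (if i = k then ε else 0) - (if i = j then ε else 0) with hl'
    have hfeas : l' ∈ K := by
      refine ⟨?_, ?_, ?_⟩
      · intro i
        simp only [hl']
        by_cases h1 : i = k
        · have hij : i ≠ j := by rw [h1]; exact hjk.symm
          rw [if_pos h1, if_neg hij]
          have := hpos i; linarith
        · rw [if_neg h1]
          by_cases h2 : i = j
          · rw [if_pos h2]
            have hlij : lam i = lam j := by rw [h2]
            linarith
          · rw [if_neg h2]; have := hpos i; linarith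
      · simp only [hl']
        rw [Finset.sum_sub_distrib, Finset.sum_add_distrib, hsum,
          Finset.sum_ite_eq' Finset.univ k (fun _ => ε),
          Finset.sum_ite_eq' Finset.univ j (fun _ => ε)]
        simp only [Finset.mem_univ, if_true]
        ring
      · intro i
        simp only [hl']
        by_cases h1 : i = k
        · have hij : i ≠ j := by rw [h1]; exact hjk.symm
          rw [if_pos h1, if_neg hij]
          have hlik : lam i = lam k := by rw [h1]
          linarith
        · rw [if_neg h1]
          by_cases h2 : i = j
          · rw [if_pos h2]; have := hcap i; linarith
          · rw [if_neg h2]; have := hcap i; linarith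
    have hval : ∑ i, l' i * t i = -‖s‖ ^ 2 + ε * (t k - t j) := by
      simp only [hl', sub_mul, add_mul, ite_mul, zero_mul]
      rw [Finset.sum_sub_distrib, Finset.sum_add_distrib,
        Finset.sum_ite_eq' Finset.univ k (fun i => ε * t i),
        Finset.sum_ite_eq' Finset.univ j (fun i => ε * t i)]
      simp only [Finset.mem_univ, if_true]
      rw [hlamt]
      ring
    have := hlin l' hfeas
    rw [hval] at this
    nlinarith
  -- choose α
  have hPne : ∃ j, 0 < lam j := by
    by_contra hcon
    push_neg at hcon
    have : ∀ k, lam k = 0 := fun k => le_antisymm (hcon k) (hpos k)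
    rw [Finset.sum_congr rfl (fun k _ => this k)] at hsum
    simp at hsum
  obtain ⟨j₀, hj₀, hj₀min⟩ :
      ∃ j₀, 0 < lam j₀ ∧ ∀ i, 0 < lam i → t j₀ ≤ t i := by
    obtain ⟨j, hj⟩ := hPne
    obtain ⟨j₀, hj₀mem, hj₀min⟩ := Finset.exists_min_image
      (Finset.univ.filter fun i => 0 < lam i) t ⟨j, by simp [hj]⟩
    refine ⟨j₀, by simpa using hj₀mem, fun i hi => hj₀min i (by simp [hi])⟩
  set α : ℝ := t j₀ with hα
  -- termwise equality
  have hterm : ∀ k, C * max 0 (t k - α) = lam k * (t k - α) := by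
    intro k
    rcases lt_trichotomy (t k) α with h | h | h
    · rw [max_eq_left (by linarith)]
      have hk0 : lam k = 0 := by
        by_contra hne
        have : 0 < lam k := lt_of_le_of_ne (hpos k) (Ne.symm hne)
        exact absurd (hj₀min k this) (by rw [← hα] at *; linarith)
      rw [hk0]; ring
    · rw [h]; simp
    · rw [max_eq_right (by linarith), hexch j₀ k hj₀ (by rw [← hα]; linarith)]
  have hsum_max : C * ∑ k, max 0 (t k - α) = -‖s‖ ^ 2 - α := by
    rw [Finset.mul_sum, Finset.sum_congr rfl (fun k _ => hterm k)]
    have : ∑ k, lam k * (t k - α) = ∑ k, lam k * t k - α * ∑ k, lam k := by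
      rw [Finset.mul_sum, ← Finset.sum_sub_distrib]
      exact Finset.sum_congr rfl fun k _ => by ring
    rw [this, hlamt, hsum]; ring
  have hinner_neg : ∀ (d : EuclideanSpace ℝ (Fin n)) k, ⟪-d, g k⟫ = -⟪d, g k⟫ := by
    intro d k; rw [inner_neg_left]
  have htk : ∀ k, ⟪-s, g k⟫ = t k := fun k => by rw [hinner_neg]
  -- the witness equality
  have hwitness : α + C * ∑ k, max 0 (⟪-(∑ j, lam j • g j), g k⟫ - α)
      + (1 / 2) * ‖∑ j, lam j • g j‖ ^ 2 = -(1 / 2) * ‖∑ k, lam k • g k‖ ^ 2 := by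
    have hrw : ∀ k, ⟪-(∑ j, lam j • g j), g k⟫ - α = t k - α := by
      intro k; rw [show (∑ j, lam j • g j) = s from rfl, htk k]
    rw [Finset.sum_congr rfl (fun k _ => by rw [hrw k]), hsum_max]
    show α + (-‖s‖ ^ 2 - α) + (1/2) * ‖s‖ ^ 2 = -(1/2) * ‖s‖ ^ 2
    ring
  -- lower bound for the primal
  have hlb : ∀ (d : EuclideanSpace ℝ (Fin n)) (β : ℝ),
      -(1 / 2) * ‖s‖ ^ 2 ≤ β + C * ∑ k, max 0 (⟪-d, g k⟫ - β) + (1 / 2) * ‖d‖ ^ 2 := by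
    intro d β
    have h1 : ∀ k, lam k * (⟪-d, g k⟫ - β) ≤ C * max 0 (⟪-d, g k⟫ - β) := by
      intro k
      rcases le_or_gt 0 (⟪-d, g k⟫ - β) with h | h
      · rw [max_eq_right h]; nlinarith [hpos k, hcap k]
      · rw [max_eq_left (le_of_lt h)]
        nlinarith [hpos k, hcap k]
    have h2 : ∑ k, lam k * (⟪-d, g k⟫ - β) ≤ ∑ k, C * max 0 (⟪-d, g k⟫ - β) :=
      Finset.sum_le_sum fun k _ => h1 k
    have h3 : ∑ k, lam k * (⟪-d, g k⟫ - β) = ⟪-d, s⟫ - β := by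
      have e1 : ⟪-d, s⟫ = ∑ k, lam k * ⟪-d, g k⟫ := by
        rw [hs, inner_sum]
        exact Finset.sum_congr rfl fun k _ => real_inner_smul_right _ _ _
      have e2 : ∑ k, lam k * (⟪-d, g k⟫ - β)
          = (∑ k, lam k * ⟪-d, g k⟫) - β * ∑ k, lam k := by
        rw [Finset.mul_sum, ← Finset.sum_sub_distrib]
        exact Finset.sum_congr rfl fun k _ => by ring
      rw [e2, hsum, e1]; ring
    have h4 : (0:ℝ) ≤ ‖d - s‖ ^ 2 := by positivity
    have h5 : ‖d - s‖ ^ 2 = ‖d‖ ^ 2 - 2 * ⟪d, s⟫ + ‖s‖ ^ 2 := norm_sub_sq_real d s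
    have h6 : ⟪-d, s⟫ = -⟪d, s⟫ := by rw [inner_neg_left]
    have h7 : C * ∑ k, max 0 (⟪-d, g k⟫ - β) = ∑ k, C * max 0 (⟪-d, g k⟫ - β) :=
      Finset.mul_sum _ _ _
    rw [h3, h6] at h2
    linarith
  -- conclude
  have hmem : -(1 / 2) * ‖∑ k, lam k • g k‖ ^ 2 ∈
      {v : ℝ | ∃ (d : EuclideanSpace ℝ (Fin n)) (β : ℝ),
        v = β + C * ∑ k, max 0 (⟪-d, g k⟫ - β) + (1 / 2) * ‖d‖ ^ 2} :=
    ⟨∑ j, lam j • g j, α, hwitness.symm⟩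
  have hSlb : ∀ v ∈ {v : ℝ | ∃ (d : EuclideanSpace ℝ (Fin n)) (β : ℝ),
      v = β + C * ∑ k, max 0 (⟪-d, g k⟫ - β) + (1 / 2) * ‖d‖ ^ 2},
      -(1 / 2) * ‖∑ k, lam k • g k‖ ^ 2 ≤ v := by
    rintro v ⟨d, β, rfl⟩
    exact hlb d β
  have hsInf : sInf {v : ℝ | ∃ (d : EuclideanSpace ℝ (Fin n)) (β : ℝ),
      v = β + C * ∑ k, max 0 (⟪-d, g k⟫ - β) + (1 / 2) * ‖d‖ ^ 2}
      = -(1 / 2) * ‖∑ k, lam k • g k‖ ^ 2 :=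
    le_antisymm (csInf_le ⟨_, hSlb⟩ hmem) (le_csInf ⟨_, hmem⟩ hSlb)
  exact ⟨lam, hpos, hsum, hcap, fun l h0 h1 h2 => hmin' l ⟨h0, h1, h2⟩, hsInf, α, hwitness⟩
end

section
/- MGDA non-conflicting property: let g_1, …, g_m ∈ ℝ^d, and let λ* minimize λ ↦ ‖∑_k λ_k g_k‖² over the probability simplex Δ. Then d = ∑_k λ*_k g_k satisfies ⟨d, g_k⟩ ≥ ‖d‖² for every k. In particular d is non-conflicting: ⟨d, g_k⟩ ≥ 0 for all k. -/
open scoped RealInnerProductSpace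
open Finset

/-- the MGDA minimum-norm direction is non-conflicting, and even
satisfies ⟪d, g_k⟫ ≥ ‖d‖² for every k. -/
theorem stmt13 {n m : ℕ} (g : Fin m → EuclideanSpace ℝ (Fin n))
    (lamstar : Fin m → ℝ)
    (hlam0 : ∀ k, 0 ≤ lamstar k) (hlam1 : ∑ k, lamstar k = 1)
    (hopt : ∀ lam : Fin m → ℝ, (∀ k, 0 ≤ lam k) → (∑ k, lam k = 1) →
      ‖∑ k, lamstar k • g k‖ ^ 2 ≤ ‖∑ k, lam k • g k‖ ^ 2)
    (d : EuclideanSpace ℝ (Fin n)) (hd : d = ∑ k, lamstar k • g k) :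
    (∀ k, ‖d‖ ^ 2 ≤ ⟪d, g k⟫) ∧ (∀ k, 0 ≤ ⟪d, g k⟫) := by
  have key : ∀ k : Fin m, ‖d‖ ^ 2 ≤ ⟪d, g k⟫ := by
    intro k
    set a : ℝ := ⟪d, g k⟫ with ha
    set N : ℝ := ‖d‖ ^ 2 with hN
    set b : ℝ := ‖g k‖ ^ 2 with hb
    -- main inequality along the segment
    have hmain : ∀ t : ℝ, 0 ≤ t → t ≤ 1 →
        N ≤ (1 - t) ^ 2 * N + 2 * (t * (1 - t)) * a + t ^ 2 * b := by
      intro t ht0 ht1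
      have hsum : ∑ j, ((1 - t) * lamstar j + t * (if j = k then 1 else 0)) = 1 := by
        rw [Finset.sum_add_distrib, ← Finset.mul_sum, ← Finset.mul_sum, hlam1]
        simp
      have hnn : ∀ j, 0 ≤ (1 - t) * lamstar j + t * (if j = k then 1 else 0) := by
        intro j
        have h1 : (0:ℝ) ≤ (1 - t) * lamstar j :=
          mul_nonneg (by linarith) (hlam0 j)
        by_cases h : j = k
        · subst h; simp; linarith
        · simp [h]; linarith
      have hvec : ∑ j, ((1 - t) * lamstar j + t * (if j = k then 1 else 0)) • g j
          = (1 - t) • d + t • g k := by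
        have hsplit : ∑ j, ((1 - t) * lamstar j + t * (if j = k then 1 else 0)) • g j
            = (∑ j, ((1 - t) * lamstar j) • g j)
              + ∑ j, (t * (if j = k then 1 else 0)) • g j := by
          rw [← Finset.sum_add_distrib]
          exact Finset.sum_congr rfl fun j _ => add_smul _ _ _
        rw [hsplit, hd, Finset.smul_sum]
        congr 1
        · exact Finset.sum_congr rfl fun j _ => mul_smul _ _ _
        · simp [mul_ite, mul_one, mul_zero, ite_smul, Finset.sum_ite_eq']
      have h1 := hopt _ hnn hsum
      rw [hvec, ← hd] at h1
      have hexp : ‖(1 - t) • d + t • g k‖ ^ 2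
          = (1 - t) ^ 2 * N + 2 * (t * (1 - t)) * a + t ^ 2 * b := by
        rw [norm_add_sq_real, norm_smul, norm_smul, real_inner_smul_left,
          real_inner_smul_right]
        simp [hN, hb, ha, abs_of_nonneg ht0, mul_pow, sq_abs]
        ring
      rw [hexp] at h1
      exact h1
    -- c = ‖d - g k‖² = N - 2a + b ≥ 0
    have hc : 0 ≤ N - 2 * a + b := by
      have : ‖d - g k‖ ^ 2 = N - 2 * a + b := by
        rw [norm_sub_sq_real]
      nlinarith [sq_nonneg ‖d - g k‖]
    by_contra hlt
    push_neg at hlt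
    set c : ℝ := N - 2 * a + b with hcdef
    -- from hmain, for t ∈ (0,1]: 2(N - a) ≤ t * c
    have hstep : ∀ t : ℝ, 0 < t → t ≤ 1 → 2 * (N - a) ≤ t * c := by
      intro t ht0 ht1
      have := hmain t ht0.le ht1
      have h2 : 0 ≤ t * (-2 * (N - a) + t * c) := by nlinarith
      nlinarith [mul_pos ht0 ht0]
    rcases eq_or_lt_of_le hc with hc0 | hcpos
    · have := hstep 1 one_pos le_rfl
      nlinarith
    · set t := min 1 ((N - a) / c) with htdef
      have ht0 : 0 < t := lt_min one_pos (div_pos (by linarith) hcpos)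
      have ht1 : t ≤ 1 := min_le_left _ _
      have h2 := hstep t ht0 ht1
      have h3 : t * c ≤ N - a := by
        have : t ≤ (N - a) / c := min_le_right _ _
        calc t * c ≤ ((N - a) / c) * c := by nlinarith
          _ = N - a := by field_simp
      nlinarith
  refine ⟨key, fun k => le_trans (by positivity) (key k)⟩
end

section
/- Counterexample-free regime for projection-based aggregation: let J ∈ ℝ^{d×m} with columns g_1, …, g_m, let q ∈ conv{g_1, …, g_m}, and let d = P_{cone*(J)}(q) be the projection of q onto the dual cone cone*(J) = {v : ⟨v, g_k⟩ ≥ 0 ∀k}. Then, with F = ∑_k f_k interpreted via its gradient ∇F(w) = ∑_k g_k when g_k = ∇f_k(w), we have ⟨d, ∑_k g_k⟩ ≥ ‖d‖². (I.e., the alignment condition ⟨d, ∇F(w)⟩ ≥ c‖d‖² holds with c = 1.) -/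
open scoped RealInnerProductSpace
open Finset

/-- the projection onto the dual cone of a point in the convex
hull of the gradients satisfies the alignment condition with c = 1. -/
theorem stmt19 {n m : ℕ} (g : Fin m → EuclideanSpace ℝ (Fin n))
    (μ : Fin m → ℝ) (hμ0 : ∀ k, 0 ≤ μ k) (hμ1 : ∑ k, μ k = 1)
    (q : EuclideanSpace ℝ (Fin n)) (hq : q = ∑ k, μ k • g k)
    (d : EuclideanSpace ℝ (Fin n))
    -- d is the Euclidean (metric) projection of q onto the dual cone cone*(J):
    (hdmem : ∀ k, 0 ≤ ⟪d, g k⟫)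
    (hdproj : ∀ y : EuclideanSpace ℝ (Fin n), (∀ k, 0 ≤ ⟪y, g k⟫) → ‖q - d‖ ≤ ‖q - y‖) :
    ‖d‖ ^ 2 ≤ ⟪d, ∑ k, g k⟫ := by
  set a : ℝ := ⟪q, d⟫ with ha
  set b : ℝ := ‖d‖ ^ 2 with hb
  -- key variational inequality
  have key : ∀ t : ℝ, 0 ≤ t → b - 2 * a ≤ t ^ 2 * b - 2 * t * a := by
    intro t ht
    have hy : ∀ k, 0 ≤ ⟪t • d, g k⟫ := by
      intro k
      rw [real_inner_smul_left]
      exact mul_nonneg ht (hdmem k)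
    have h := hdproj (t • d) hy
    have h2 : ‖q - d‖ ^ 2 ≤ ‖q - t • d‖ ^ 2 :=
      pow_le_pow_left₀ (norm_nonneg _) h 2
    have e1 : ‖q - d‖ ^ 2 = ‖q‖ ^ 2 - 2 * a + b := by
      rw [norm_sub_sq_real, ha, hb]
    have e2 : ‖q - t • d‖ ^ 2 = ‖q‖ ^ 2 - 2 * t * a + t ^ 2 * b := by
      rw [norm_sub_sq_real, real_inner_smul_right, norm_smul]
      rw [ha, hb]
      simp [mul_pow, sq_abs]
      ring
    rw [e1, e2] at h2
    linarith
  have hb0 : 0 ≤ b := by positivity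
  have ha0 : 0 ≤ a := by have := key 0 le_rfl; linarith
  have hba : b ≤ a := by
    rcases eq_or_lt_of_le hb0 with hb0' | hb0'
    · linarith
    · have h := key (a / b) (div_nonneg ha0 (le_of_lt hb0'))
      have h2 : (a / b) ^ 2 * b = a ^ 2 / b := by field_simp
      have h3 : (a / b) * a = a ^ 2 / b := by field_simp
      have : b - 2 * a ≤ a ^ 2 / b - 2 * (a ^ 2 / b) := by
        calc b - 2 * a ≤ (a/b)^2 * b - 2 * ((a/b) * a) := by linarith [h]; 
          _ = a ^ 2 / b - 2 * (a ^ 2 / b) := by rw [h2, h3]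
      have h4 : (b - a) ^ 2 ≤ 0 := by
        have hbne : b ≠ 0 := ne_of_gt hb0'
        have := mul_le_mul_of_nonneg_right this hb0
        field_simp at this
        nlinarith
      nlinarith [sq_nonneg (b - a)]
  -- now a ≤ ⟪d, ∑ g k⟫
  have hsum : ⟪d, ∑ k, g k⟫ = ∑ k, ⟪d, g k⟫ := by
    simp [inner_sum]
  have haexp : a = ∑ k, μ k * ⟪d, g k⟫ := by
    rw [ha, hq, sum_inner]
    congr 1; ext k
    rw [real_inner_smul_left, real_inner_comm]
  have hle : ∑ k, μ k * ⟪d, g k⟫ ≤ ∑ k, ⟪d, g k⟫ := by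
    apply Finset.sum_le_sum
    intro k _
    have hμk : μ k ≤ 1 := by
      have := Finset.single_le_sum (f := μ) (fun i _ => hμ0 i) (Finset.mem_univ k)
      linarith [hμ1 ▸ this]
    nlinarith [hdmem k, hμ0 k]
  rw [hsum]
  calc b ≤ a := hba
    _ = ∑ k, μ k * ⟪d, g k⟫ := haexp
    _ ≤ ∑ k, ⟪d, g k⟫ := hle
end
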